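/- Let X be the smooth vector field on ℝ² given by X(x,y) = ((2 + 3xy²)x, −(1 + 2xy²)y). Then there exists a smooth function F : ℝ² → ℝ such that: (a) all iterated derivatives of F vanish at the origin (F is flat at (0,0)); (b) F is not identically zero on any neighborhood of (0,0); and (c) X(F) = 0 near the origin, i.e. (2 + 3xy²)x·∂F/∂x − (1 + 2xy²)y·∂F/∂y = 0 on a neighborhood of (0,0). -/

import Mathlib

open scoped Topology

/-- The flat first integral: `F(x,y) = x²y³·expNegInvGlue(xy²)`. -/
noncomputable def flatFI : ℝ × ℝ → ℝ :=
  fun p => p.1 * p.1 * (p.2 * p.2 * p.2) * expNegInvGlue (p.1 * (p.2 * p.2))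

lemma flatFI_smooth : ContDiff ℝ (⊤ : ℕ∞) flatFI :=
  ((contDiff_fst.mul contDiff_fst).mul
      ((contDiff_snd.mul contDiff_snd).mul contDiff_snd)).mul
    (expNegInvGlue.contDiff.comp (contDiff_fst.mul (contDiff_snd.mul contDiff_snd)))

lemma flatFI_zero_of_neg {p : ℝ × ℝ} (hp : p.1 ≤ 0) : flatFI p = 0 := by
  have h : p.1 * (p.2 * p.2) ≤ 0 :=
    mul_nonpos_iff.2 (Or.inr ⟨hp, mul_self_nonneg _⟩)
  simp [flatFI, expNegInvGlue.zero_of_nonpos h]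

lemma flatFI_iteratedFDeriv_zero_of_neg {k : ℕ} {p : ℝ × ℝ} (hp : p.1 < 0) :
    iteratedFDeriv ℝ k flatFI p = 0 := by
  have hopen : IsOpen {q : ℝ × ℝ | q.1 < 0} := isOpen_lt continuous_fst continuous_const
  have hEq : flatFI =ᶠ[𝓝 p] (fun _ => (0 : ℝ)) := by
    filter_upwards [hopen.mem_nhds hp] with q hq
    exact flatFI_zero_of_neg (le_of_lt hq)
  calc iteratedFDeriv ℝ k flatFI p
      = iteratedFDeriv ℝ k (fun _ => (0 : ℝ)) p := by
        rw [← iteratedFDerivWithin_univ, ← iteratedFDerivWithin_univ]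
        exact (hEq.filter_mono nhdsWithin_le_nhds).iteratedFDerivWithin_eq hEq.self_of_nhds k
    _ = 0 := by rw [iteratedFDeriv_zero_fun]; rfl

lemma flatFI_flat (k : ℕ) : iteratedFDeriv ℝ k flatFI ((0:ℝ), (0:ℝ)) = 0 := by
  have hc : Continuous (iteratedFDeriv ℝ k flatFI) :=
    flatFI_smooth.continuous_iteratedFDeriv (mod_cast le_top)
  have h1 : Filter.Tendsto (fun n : ℕ => ((-(1 / ((n:ℝ) + 1)), 0) : ℝ × ℝ))
      Filter.atTop (𝓝 ((0:ℝ), (0:ℝ))) := by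
    have := (tendsto_one_div_add_atTop_nhds_zero_nat (𝕜 := ℝ)).neg
    rw [neg_zero] at this
    exact this.prodMk_nhds tendsto_const_nhds
  have h2 := (hc.tendsto _).comp h1
  have h3 : (fun n : ℕ => iteratedFDeriv ℝ k flatFI (-(1 / ((n:ℝ) + 1)), 0)) =
      fun _ => (0 : (ℝ × ℝ) [×k]→L[ℝ] ℝ) := by
    funext n
    exact flatFI_iteratedFDeriv_zero_of_neg (neg_lt_zero.2 (by positivity))
  rw [Function.comp_def, h3] at h2
  exact tendsto_nhds_unique h2 tendsto_const_nhds

lemma flatFI_fderiv (p : ℝ × ℝ) :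
    fderiv ℝ flatFI p
      ((2 + 3 * p.1 * p.2 ^ 2) * p.1, -(1 + 2 * p.1 * p.2 ^ 2) * p.2) = 0 := by
  set u := p.1 * (p.2 * p.2) with hu_def
  set d := deriv expNegInvGlue u with hd_def
  have hglue : HasDerivAt expNegInvGlue d u :=
    ((expNegInvGlue.contDiff (n := 1)).differentiable one_ne_zero u).hasDerivAt
  have hq : HasFDerivAt (fun p : ℝ × ℝ => p.1 * (p.2 * p.2)) _ p :=
    (hasFDerivAt_fst (𝕜 := ℝ) (p := p)).mul
      ((hasFDerivAt_snd (𝕜 := ℝ) (p := p)).mul (hasFDerivAt_snd (𝕜 := ℝ) (p := p)))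
  have hcomp := hglue.comp_hasFDerivAt p hq
  have hG : HasFDerivAt (fun p : ℝ × ℝ => p.1 * p.1 * (p.2 * p.2 * p.2)) _ p :=
    ((hasFDerivAt_fst (𝕜 := ℝ) (p := p)).mul (hasFDerivAt_fst (𝕜 := ℝ) (p := p))).mul
      (((hasFDerivAt_snd (𝕜 := ℝ) (p := p)).mul (hasFDerivAt_snd (𝕜 := ℝ) (p := p))).mul
        (hasFDerivAt_snd (𝕜 := ℝ) (p := p)))
  have hF : HasFDerivAt flatFI _ p := hG.mul hcomp
  rw [hF.fderiv]
  simp only [ContinuousLinearMap.add_apply, ContinuousLinearMap.smul_apply,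
    ContinuousLinearMap.coe_fst', ContinuousLinearMap.coe_snd', smul_eq_mul,
    Function.comp_apply]
  rcases lt_trichotomy u 0 with h | h | h
  · have hg0 : expNegInvGlue u = 0 := expNegInvGlue.zero_of_nonpos h.le
    have hd0 : d = 0 := by
      have h1 : HasDerivAt expNegInvGlue 0 u := by
        refine (hasDerivAt_const u (0:ℝ)).congr_of_eventuallyEq ?_
        filter_upwards [Iio_mem_nhds h] with x hx
        exact expNegInvGlue.zero_of_nonpos (le_of_lt hx)
      rw [hd_def, h1.deriv]
    rw [hg0, hd0]; ring
  · have hxy : p.1 = 0 ∨ p.2 = 0 := by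
      rcases mul_eq_zero.1 h with h1 | h1
      · exact Or.inl h1
      · exact Or.inr (by rcases mul_eq_zero.1 h1 with h2 | h2 <;> exact h2)
    have hg0 : expNegInvGlue u = 0 := by rw [h]; exact expNegInvGlue.zero
    rcases hxy with h1 | h1 <;> rw [hg0, h1] <;> ring
  · have hg : expNegInvGlue u = Real.exp (-u⁻¹) := by
      simp [expNegInvGlue, h.not_ge]
    have hd : d = Real.exp (-u⁻¹) * u⁻¹ ^ 2 := by
      have h1 : HasDerivAt (fun x : ℝ => Real.exp (-x⁻¹)) (Real.exp (-u⁻¹) * u⁻¹ ^ 2) u := by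
        have := ((hasDerivAt_inv h.ne').neg).exp
        simp only [Pi.neg_apply] at this
        convert this using 1; ring
      have h2 : HasDerivAt expNegInvGlue (Real.exp (-u⁻¹) * u⁻¹ ^ 2) u := by
        refine h1.congr_of_eventuallyEq ?_
        filter_upwards [Ioi_mem_nhds h] with x hx
        simp [expNegInvGlue, (not_le.2 (Set.mem_Ioi.1 hx))]
      rw [hd_def, h2.deriv]
    have hx0 : p.1 ≠ 0 := fun hx => by simp [hu_def, hx] at h
    have hy0 : p.2 ≠ 0 := fun hy => by simp [hu_def, hy] at h
    rw [hg, hd]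
    simp only [Pi.mul_apply]
    rw [hu_def]
    field_simp
    ring

/-- (Flat first integral of the Example in Section 2.4.) The smooth
hyperbolic vector field `X(x,y) = ((2+3xy²)x, −(1+2xy²)y)` on `ℝ²` admits a smooth first
integral `F` which is flat at the origin (all iterated derivatives vanish at `(0,0)`) but not
identically zero on any neighborhood of the origin. -/
theorem flat_first_integral_exists :
    ∃ F : ℝ × ℝ → ℝ,
      ContDiff ℝ (⊤ : ℕ∞) F ∧
      -- (a) F is flat at the origin :
      (∀ k : ℕ, iteratedFDeriv ℝ k F ((0:ℝ), (0:ℝ)) = 0) ∧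
      -- (b) F is not identically zero near the origin :
      (∀ U ∈ nhds ((0:ℝ), (0:ℝ)), ∃ p ∈ U, F p ≠ 0) ∧
      -- (c) X(F) = 0 near the origin :
      (∃ U ∈ nhds ((0:ℝ), (0:ℝ)), ∀ p ∈ U,
        fderiv ℝ F p ((2 + 3 * p.1 * p.2 ^ 2) * p.1, -(1 + 2 * p.1 * p.2 ^ 2) * p.2) = 0) := by
  refine ⟨flatFI, flatFI_smooth, flatFI_flat, ?_, Set.univ, Filter.univ_mem,
    fun p _ => flatFI_fderiv p⟩
  intro U hU
  obtain ⟨ε, hε, hball⟩ := Metric.mem_nhds_iff.1 hU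
  have hε2 : 0 < ε / 2 := half_pos hε
  refine ⟨(ε / 2, ε / 2), hball ?_, ?_⟩
  · simp only [Metric.mem_ball, Prod.dist_eq, Real.dist_eq, sub_zero, max_self,
      abs_of_pos hε2]
    linarith
  · have hglue : 0 < expNegInvGlue (ε / 2 * (ε / 2 * (ε / 2))) :=
      expNegInvGlue.pos_of_pos (by positivity)
    exact ne_of_gt (mul_pos (mul_pos (mul_pos hε2 hε2)
      (mul_pos (mul_pos hε2 hε2) hε2)) hglue)
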